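/- (sup inf R ≥ 0.) Let f ∈ L¹(μ) be positive on T\{0} and h = f·II(f) with h_0 = 0, i.e., h_i = Σ_{k∈P(i)} (1/(μ_k q_{kk*})) Σ_{j∈T_k} μ_j f_j. Set w̄_i = h_i/h_{i*}. Then R_i(w̄) = f_i/h_i > 0 for all i ∈ T\{0}, hence sup_{w∈W} inf_{i∈T\{0}} R_i(w) ≥ 0. -/

import Mathlib

open Finset
open scoped Classical

structure BDTree (V : Type*) [Fintype V] where
  root : V
  parent : V → V
  layer : V → ℕ
  q : V → V → ℝ
  parent_root : parent root = root
  layer_root : layer root = 0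
  layer_parent : ∀ i, i ≠ root → layer i = layer (parent i) + 1
  reach : ∀ i, ∃ n, parent^[n] i = root
  q_pos_up : ∀ i, i ≠ root → 0 < q i (parent i)
  q_pos_down : ∀ i, i ≠ root → 0 < q (parent i) i

namespace BDTree

variable {V : Type*} [Fintype V] (T : BDTree V)

/-- The set of sons of a vertex. -/
noncomputable def sons (i : V) : Finset V :=
  Finset.univ.filter fun j => j ≠ T.root ∧ T.parent j = i

/-- The subtree `T_k` rooted at `k` (including `k`). -/
noncomputable def subtree (k : V) : Finset V :=
  Finset.univ.filter fun j => ∃ n, T.parent^[n] j = k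

/-- The path set `P(i)`: vertices (excluding the root) on the path from `i` to the root. -/
noncomputable def pathSet (i : V) : Finset V :=
  Finset.univ.filter fun k => k ≠ T.root ∧ ∃ n, T.parent^[n] i = k

/-- The symmetric measure `μ`. -/
noncomputable def mu (k : V) : ℝ :=
  ∏ j ∈ T.pathSet k, T.q (T.parent j) j / T.q j (T.parent j)

/-- The operator `Ω`. -/
noncomputable def Omega (g : V → ℝ) (i : V) : ℝ :=
  (∑ j ∈ T.sons i, T.q i j * (g j - g i)) + T.q i (T.parent i) * (g (T.parent i) - g i)

/-- The set of non-root vertices `T \ {0}`. -/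
noncomputable def nonroot : Finset V := Finset.univ.filter fun i => i ≠ T.root

/-- The Dirichlet form `D(f)`. -/
noncomputable def D (f : V → ℝ) : ℝ :=
  ∑ i ∈ T.nonroot, T.mu i * T.q i (T.parent i) * (f i - f (T.parent i)) ^ 2

/-- `μ(f²)`. -/
noncomputable def norm2 (f : V → ℝ) : ℝ := ∑ i ∈ T.nonroot, T.mu i * f i ^ 2

/-- The principal Dirichlet eigenvalue `λ₀`, via the classical variational formula. -/
noncomputable def lam0 : ℝ := sInf {r | ∃ f : V → ℝ, f T.root = 0 ∧ T.norm2 f = 1 ∧ r = T.D f}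

/-- The single-summation operator `I`. -/
noncomputable def opI (f : V → ℝ) (i : V) : ℝ :=
  (∑ j ∈ T.subtree i, T.mu j * f j) /
    (T.mu i * T.q i (T.parent i) * (f i - f (T.parent i)))

/-- The double-summation operator `II`. -/
noncomputable def opII (f : V → ℝ) (i : V) : ℝ :=
  (∑ k ∈ T.pathSet i, (1 / (T.mu k * T.q k (T.parent k))) *
      ∑ j ∈ T.subtree k, T.mu j * f j) / f i

/-- The difference-form operator `R`; at a son of the root the convention `w_0 = ∞`,
`1/∞ = 0` is used, i.e. the term `w i⁻¹` is replaced by `0`. -/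
noncomputable def R (w : V → ℝ) (i : V) : ℝ :=
  T.q i (T.parent i) * (1 - (if T.parent i = T.root then 0 else (w i)⁻¹)) +
    ∑ j ∈ T.sons i, T.q i j * (1 - w j)

/-- Membership in the test-function class `W = {w : w > 1, w_0 = ∞}` (the value at a son
of the root plays the role of `∞` and is not used by `R`). -/
def memW (w : V → ℝ) : Prop := ∀ i, i ≠ T.root → T.parent i ≠ T.root → 1 < w i

/-- `φ_j = Σ_{k∈P(j)} 1/(μ_k q_{kk*})`. -/
noncomputable def phi (j : V) : ℝ :=
  ∑ k ∈ T.pathSet j, 1 / (T.mu k * T.q k (T.parent k))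

end BDTree

namespace BDTree

variable {V : Type*} [Fintype V] (T : BDTree V)

lemma iterate_root (n : ℕ) : T.parent^[n] T.root = T.root := by
  induction n with
  | zero => rfl
  | succ n ih => rw [Function.iterate_succ_apply', ih, T.parent_root]

lemma layer_parent_le (j : V) : T.layer (T.parent j) ≤ T.layer j := by
  by_cases hj : j = T.root
  · subst hj; rw [T.parent_root]
  · rw [T.layer_parent j hj]; omega

lemma layer_iterate_le (n : ℕ) (j : V) : T.layer (T.parent^[n] j) ≤ T.layer j := by
  induction n with
  | zero => rfl
  | succ n ih =>
    rw [Function.iterate_succ_apply']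
    exact le_trans (T.layer_parent_le _) ih

/-- A vertex strictly below `i` (a child `c` of `i`) is not an iterated parent of `i`. -/
lemma iterate_ne_child {i c : V} (hc : c ≠ T.root) (hpc : T.parent c = i) (n : ℕ) :
    T.parent^[n] i ≠ c := by
  intro hcontra
  have h1 : T.layer (T.parent^[n] i) ≤ T.layer i := T.layer_iterate_le n i
  rw [hcontra, T.layer_parent c hc, hpc] at h1
  omega

lemma mem_pathSet_iff {i k : V} :
    k ∈ T.pathSet i ↔ k ≠ T.root ∧ ∃ n, T.parent^[n] i = k := by
  simp [pathSet]

lemma pathSet_root : T.pathSet T.root = ∅ := by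
  ext k
  simp only [mem_pathSet_iff, Finset.notMem_empty, iff_false, not_and]
  rintro hk ⟨n, hn⟩
  exact hk (by rw [← hn, T.iterate_root])

lemma mem_pathSet_self {i : V} (hi : i ≠ T.root) : i ∈ T.pathSet i :=
  T.mem_pathSet_iff.2 ⟨hi, 0, rfl⟩

lemma not_mem_pathSet_parent {i : V} (hi : i ≠ T.root) : i ∉ T.pathSet (T.parent i) := by
  rw [mem_pathSet_iff]
  rintro ⟨-, n, hn⟩
  exact T.iterate_ne_child hi rfl n hn

lemma pathSet_eq {i : V} (hi : i ≠ T.root) :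
    T.pathSet i = insert i (T.pathSet (T.parent i)) := by
  ext k
  simp only [mem_pathSet_iff, Finset.mem_insert]
  constructor
  · rintro ⟨hk, n, hn⟩
    rcases n with _ | n
    · exact Or.inl hn.symm
    · exact Or.inr ⟨hk, n, by rwa [Function.iterate_succ_apply] at hn⟩
  · rintro (rfl | ⟨hk, n, hn⟩)
    · exact ⟨hi, 0, rfl⟩
    · exact ⟨hk, n + 1, by rwa [Function.iterate_succ_apply]⟩

lemma mem_pathSet_ne_root {i k : V} (hk : k ∈ T.pathSet i) : k ≠ T.root :=
  (T.mem_pathSet_iff.1 hk).1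

lemma mu_pos (k : V) : 0 < T.mu k := by
  refine Finset.prod_pos fun j hj => ?_
  have hj' := T.mem_pathSet_ne_root hj
  exact div_pos (T.q_pos_down j hj') (T.q_pos_up j hj')

lemma mem_subtree_iff {k j : V} : j ∈ T.subtree k ↔ ∃ n, T.parent^[n] j = k := by
  simp [subtree]

lemma mem_subtree_self (k : V) : k ∈ T.subtree k := T.mem_subtree_iff.2 ⟨0, rfl⟩

lemma mem_subtree_ne_root {k j : V} (hk : k ≠ T.root) (hj : j ∈ T.subtree k) :
    j ≠ T.root := by
  rintro rfl
  obtain ⟨n, hn⟩ := T.mem_subtree_iff.1 hj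
  rw [T.iterate_root] at hn
  exact hk hn.symm

lemma mem_sons_iff {i c : V} : c ∈ T.sons i ↔ c ≠ T.root ∧ T.parent c = i := by
  simp [sons]

lemma subtree_eq {i : V} (hi : i ≠ T.root) :
    T.subtree i = insert i ((T.sons i).biUnion T.subtree) := by
  ext j
  simp only [mem_subtree_iff, Finset.mem_insert, Finset.mem_biUnion, mem_sons_iff]
  constructor
  · rintro ⟨n, hn⟩
    rcases n with _ | n
    · exact Or.inl hn
    · rw [Function.iterate_succ_apply'] at hn
      refine Or.inr ⟨T.parent^[n] j, ⟨?_, hn⟩, n, rfl⟩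
      intro hr
      rw [hr, T.parent_root] at hn
      exact hi hn.symm
  · rintro (rfl | ⟨c, ⟨hc, hpc⟩, n, hn⟩)
    · exact ⟨0, rfl⟩
    · exact ⟨n + 1, by rw [Function.iterate_succ_apply', hn, hpc]⟩

lemma not_mem_biUnion_sons {i : V} : i ∉ (T.sons i).biUnion T.subtree := by
  simp only [Finset.mem_biUnion, mem_sons_iff, not_exists]
  rintro c ⟨⟨hc, hpc⟩, hmem⟩
  obtain ⟨n, hn⟩ := T.mem_subtree_iff.1 hmem
  exact T.iterate_ne_child hc hpc n hn

lemma sons_subtree_disjoint {i : V} :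
    ∀ c ∈ T.sons i, ∀ c' ∈ T.sons i, c ≠ c' → Disjoint (T.subtree c) (T.subtree c') := by
  have key : ∀ c c' : V, c ∈ T.sons i → c' ∈ T.sons i → ∀ j n m, n ≤ m →
      T.parent^[n] j = c → T.parent^[m] j = c' → c = c' := by
    intro c c' hc hc' j n m hnm hn hm
    obtain ⟨hcroot, hpc⟩ := T.mem_sons_iff.1 hc
    obtain ⟨hcroot', hpc'⟩ := T.mem_sons_iff.1 hc'
    rcases Nat.eq_or_lt_of_le hnm with rfl | hlt
    · rw [← hn, ← hm]
    · exfalso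
      have h1 : T.parent^[m - n] c = c' := by
        rw [← hn, ← Function.iterate_add_apply, Nat.sub_add_cancel hnm, hm]
      obtain ⟨d, hd⟩ : ∃ d, m - n = d + 1 := ⟨m - n - 1, by omega⟩
      rw [hd, Function.iterate_succ_apply, hpc] at h1
      exact T.iterate_ne_child hcroot' hpc' d h1
  intro c hc c' hc' hne
  rw [Finset.disjoint_left]
  intro j hj hj'
  obtain ⟨n, hn⟩ := T.mem_subtree_iff.1 hj
  obtain ⟨m, hm⟩ := T.mem_subtree_iff.1 hj'
  rcases le_total n m with hnm | hnm
  · exact hne (key c c' hc hc' j n m hnm hn hm)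
  · exact hne ((key c' c hc' hc j m n hnm hm hn).symm)

lemma sum_subtree {i : V} (hi : i ≠ T.root) (g : V → ℝ) :
    ∑ j ∈ T.subtree i, g j = g i + ∑ c ∈ T.sons i, ∑ j ∈ T.subtree c, g j := by
  rw [T.subtree_eq hi, Finset.sum_insert T.not_mem_biUnion_sons,
    Finset.sum_biUnion T.sons_subtree_disjoint]

/-- Symmetry of the measure: `μ_j q_{j j*} = μ_{j*} q_{j* j}`. -/
lemma mu_symm {j : V} (hj : j ≠ T.root) :
    T.mu j * T.q j (T.parent j) = T.mu (T.parent j) * T.q (T.parent j) j := by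
  have h1 : T.mu j = T.q (T.parent j) j / T.q j (T.parent j) * T.mu (T.parent j) := by
    rw [mu, mu, T.pathSet_eq hj, Finset.prod_insert (T.not_mem_pathSet_parent hj)]
  rw [h1]
  field_simp [ne_of_gt (T.q_pos_up j hj)]

end BDTree

/-- with `h = f·II(f)` and `w̄ = h/h∘parent`, `R_i(w̄) = f_i/h_i > 0`;
hence `sup_{w∈W} inf_i R_i(w) ≥ 0`. -/
theorem stmt17 {V : Type*} [Fintype V] (T : BDTree V) (hne : T.nonroot.Nonempty)
    (f : V → ℝ) (hfpos : ∀ i, i ≠ T.root → 0 < f i) (h : V → ℝ)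
    (hh : ∀ i, h i = ∑ k ∈ T.pathSet i,
        (1 / (T.mu k * T.q k (T.parent k))) * ∑ j ∈ T.subtree k, T.mu j * f j) :
    (∀ i, i ≠ T.root →
        T.R (fun j => h j / h (T.parent j)) i = f i / h i ∧ 0 < f i / h i) ∧
    0 ≤ sSup {x | ∃ w, T.memW w ∧ x = T.nonroot.inf' hne fun i => T.R w i} := by
  classical
  set S : V → ℝ := fun k => ∑ j ∈ T.subtree k, T.mu j * f j with hS
  have hSpos : ∀ k, k ≠ T.root → 0 < S k := by
    intro k hk
    refine Finset.sum_pos (fun j hj => ?_) ⟨k, T.mem_subtree_self k⟩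
    exact mul_pos (T.mu_pos j) (hfpos j (T.mem_subtree_ne_root hk hj))
  have hqpos : ∀ k : V, k ≠ T.root → 0 < T.mu k * T.q k (T.parent k) := fun k hk =>
    mul_pos (T.mu_pos k) (T.q_pos_up k hk)
  have hroot0 : h T.root = 0 := by rw [hh, T.pathSet_root, Finset.sum_empty]
  have hdiff : ∀ i, i ≠ T.root →
      h i = h (T.parent i) + 1 / (T.mu i * T.q i (T.parent i)) * S i := by
    intro i hi
    rw [hh, hh, T.pathSet_eq hi, Finset.sum_insert (T.not_mem_pathSet_parent hi)]
    ring
  have hpos : ∀ i, i ≠ T.root → 0 < h i := by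
    intro i hi
    rw [hh]
    refine Finset.sum_pos (fun k hk => ?_) ⟨i, T.mem_pathSet_self hi⟩
    have hk' := T.mem_pathSet_ne_root hk
    exact mul_pos (by have := hqpos k hk'; positivity) (hSpos k hk')
  have hpar_nonneg : ∀ i : V, 0 ≤ h (T.parent i) := by
    intro i
    by_cases hp : T.parent i = T.root
    · rw [hp, hroot0]
    · exact (hpos _ hp).le
  -- the main computation
  have main : ∀ i, i ≠ T.root → T.R (fun j => h j / h (T.parent j)) i = f i / h i := by
    intro i hi
    have hhi : h i ≠ 0 := ne_of_gt (hpos i hi)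
    have hif : (if T.parent i = T.root then (0:ℝ)
        else ((fun j => h j / h (T.parent j)) i)⁻¹) = h (T.parent i) / h i := by
      by_cases hp : T.parent i = T.root
      · simp [hp, hroot0]
      · simp only [hp, if_false, inv_div]
    rw [BDTree.R, hif]
    have hsons : ∀ j ∈ T.sons i,
        T.q i j * (1 - (fun j => h j / h (T.parent j)) j) =
          -(S j / T.mu i) / h i := by
      intro j hj
      obtain ⟨hjroot, hpj⟩ := T.mem_sons_iff.1 hj
      have h1 : h j = h i + 1 / (T.mu j * T.q j (T.parent j)) * S j := by
        rw [hdiff j hjroot, hpj]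
      have hsym : T.mu j * T.q j (T.parent j) = T.mu i * T.q i j := by
        rw [T.mu_symm hjroot, hpj]
      have hq : T.q i j ≠ 0 := by
        have := T.q_pos_down j hjroot; rw [hpj] at this; exact ne_of_gt this
      have hmu : T.mu i ≠ 0 := ne_of_gt (T.mu_pos i)
      rw [hsym] at h1
      simp only [h1, hpj]
      field_simp
      ring
    rw [Finset.sum_congr rfl hsons]
    have h2 : T.q i (T.parent i) * (1 - h (T.parent i) / h i) = (S i / T.mu i) / h i := by
      have h1 : h i = h (T.parent i) + 1 / (T.mu i * T.q i (T.parent i)) * S i :=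
        hdiff i hi
      have hq : T.q i (T.parent i) ≠ 0 := ne_of_gt (T.q_pos_up i hi)
      have hmu : T.mu i ≠ 0 := ne_of_gt (T.mu_pos i)
      have hd : h i - h (T.parent i) = 1 / (T.mu i * T.q i (T.parent i)) * S i := by
        rw [h1]; ring
      rw [one_sub_div hhi, hd]
      field_simp
    rw [h2, ← Finset.sum_div, ← add_div]
    congr 1
    have hdecomp : S i = T.mu i * f i + ∑ c ∈ T.sons i, S c := T.sum_subtree hi _
    have hmu : T.mu i ≠ 0 := ne_of_gt (T.mu_pos i)
    have hsum : ∑ c ∈ T.sons i, -(S c / T.mu i) = -((∑ c ∈ T.sons i, S c) / T.mu i) := by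
      simp [Finset.sum_div]
    rw [hsum, hdecomp]
    field_simp
    ring
  refine ⟨fun i hi => ⟨main i hi, div_pos (hfpos i hi) (hpos i hi)⟩, ?_⟩
  -- the sup bound
  set wbar : V → ℝ := fun j => h j / h (T.parent j) with hwbar
  have hmemW : T.memW wbar := by
    intro i hi hip
    have hpi : 0 < h (T.parent i) := hpos _ hip
    rw [hwbar]
    rw [lt_div_iff₀ hpi, one_mul]
    rw [hdiff i hi]
    have : 0 < 1 / (T.mu i * T.q i (T.parent i)) * S i :=
      mul_pos (by have := hqpos i hi; positivity) (hSpos i hi)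
    linarith
  set x₀ : ℝ := T.nonroot.inf' hne fun i => T.R wbar i with hx₀
  have hx₀mem : x₀ ∈ {x | ∃ w, T.memW w ∧ x = T.nonroot.inf' hne fun i => T.R w i} :=
    ⟨wbar, hmemW, rfl⟩
  have hx₀pos : 0 < x₀ := by
    rw [hx₀, Finset.lt_inf'_iff]
    intro i hi
    have hi' : i ≠ T.root := by simpa [BDTree.nonroot] using hi
    rw [main i hi']
    exact div_pos (hfpos i hi') (hpos i hi')
  by_cases hbdd : BddAbove {x | ∃ w, T.memW w ∧ x = T.nonroot.inf' hne fun i => T.R w i}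
  · exact le_of_lt (lt_of_lt_of_le hx₀pos (le_csSup hbdd hx₀mem))
  · rw [Real.sSup_of_not_bddAbove hbdd]
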